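/- Assume νˢ ≠ 1 (so D ≠ 0). Then the point v₆ (gen-free-2) with coordinates x₁ = −ζˢ/D, x₂ = β₁/β₂ + ζˢ/D, yˢ = (β₁ − β₂)ζˢ/(Dβ₂γˢ), y₁ = 0, y₂ = 0, zˢ = (β₂ − β₁)/(αˢβ₂), z = 0 is an equilibrium of F, i.e. F(v₆) = 0. -/
import Mathlib

theorem v₆_gen_free_2_is_equilibrium
    (α αs β₁ β₂ μ γs γ₁ γ₂ κ₁ κ₂ ν νs ζs ζ : ℝ)
    (hα : 0 < α) (hαs : 0 < αs) (hβ₁pos : 0 < β₁) (hβ₂pos : 0 < β₂)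
    (hμ : 0 < μ) (hγs : 0 < γs) (hγ₁ : 0 < γ₁) (hγ₂ : 0 < γ₂)
    (hκ₁ : 0 < κ₁) (hκ₂ : 0 < κ₂) (hν : 0 < ν) (hνs : 0 < νs)
    (hζs : 0 < ζs) (hζ : 0 < ζ)
    (hνs1 : νs ≠ 1)
    (D : ℝ) (hD : D = αs * (νs - 1))
    (x₁ x₂ ys y₁ y₂ zs z : ℝ)
    (hx₁ : x₁ = -ζs / D) (hx₂ : x₂ = β₁ / β₂ + ζs / D)
    (hys : ys = (β₁ - β₂) * ζs / (D * β₂ * γs))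
    (hy₁ : y₁ = 0) (hy₂ : y₂ = 0)
    (hzs : zs = (β₂ - β₁) / (αs * β₂)) (hz : z = 0) :
    x₁ * (1 - x₁ - x₂) - α * x₁ * z - αs * x₁ * zs = 0 ∧
    x₂ * (β₁ - β₂ * (x₁ + x₂)) - α * x₂ * z = 0 ∧
    αs * zs * x₁ + μ * y₁ - γs * ys = 0 ∧
    α * z * x₁ - (μ + γ₁) * y₁ = 0 ∧
    α * z * x₂ - γ₂ * y₂ = 0 ∧
    γs * ys - νs * αs * zs * x₁ - ζs * zs = 0 ∧
    κ₁ * γ₁ * y₁ + κ₂ * γ₂ * y₂ - ν * α * z * (x₁ + x₂) - ζ * z = 0 := by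
  have hDne : D ≠ 0 := by
    rw [hD]
    exact mul_ne_zero hαs.ne' (sub_ne_zero.mpr hνs1)
  subst hD hx₁ hx₂ hys hy₁ hy₂ hzs hz
  refine ⟨?_, ?_, ?_, ?_, ?_, ?_, ?_⟩ <;>
    field_simp <;> ring
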